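/- arXiv:1910.11207 — 3 statements merged into one kernel-verified Lean document; each statement's English description precedes it below -/
import Mathlib

section
/- For all but finitely many positive integers n the following holds. If n ≡ 0 or 3 (mod 4), then there exists a finite nondecreasing sequence of positive integers n₁ ≤ n₂ ≤ … ≤ n_k with n₁ = 1, n₁ + … + n_k = n, and 2·(C(n₁+1,2) + … + C(n_k+1,2)) = C(n+1,2). If n ≡ 1 or 2 (mod 4), then there exists a finite nondecreasing sequence of positive integers n₁ ≤ n₂ ≤ … ≤ n_k with k ≥ 2, n₁ = n₂ = 1, n₁ + … + n_k = n, and 2·(C(n₁+1,2) + … + C(n_k+1,2)) = C(n+1,2) + 1. -/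
/-- The partition condition in the case `n ≡ 0, 3 (mod 4)`: there is a nondecreasing
list of positive integers, with first entry `1`, summing to `n`, and with
`2 * Σ C(nᵢ+1, 2) = C(n+1, 2)`. -/
def GoodPartitionA (n : ℕ) : Prop :=
  ∃ l : List ℕ, l.Pairwise (· ≤ ·) ∧ (∀ x ∈ l, 0 < x) ∧ l.head? = some 1 ∧
    l.sum = n ∧ 2 * (l.map fun m => Nat.choose (m + 1) 2).sum = Nat.choose (n + 1) 2

/-- The partition condition in the case `n ≡ 1, 2 (mod 4)`: there is a nondecreasing
list of positive integers of length at least `2`, with first two entries `1`, summing to `n`,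
and with `2 * Σ C(nᵢ+1, 2) = C(n+1, 2) + 1`. -/
def GoodPartitionB (n : ℕ) : Prop :=
  ∃ l : List ℕ, l.Pairwise (· ≤ ·) ∧ (∀ x ∈ l, 0 < x) ∧ 2 ≤ l.length ∧
    l.head? = some 1 ∧ l.tail.head? = some 1 ∧
    l.sum = n ∧ 2 * (l.map fun m => Nat.choose (m + 1) 2).sum = Nat.choose (n + 1) 2 + 1



lemma sorted_replicate (n a : ℕ) : (List.replicate n a).Pairwise (·≤·) := by
  induction n with
  | zero => simp
  | succ k ih => simpa [List.replicate_succ, List.mem_replicate] using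
      ⟨fun b h hb => hb ▸ le_refl a, ih⟩

lemma two_mul_choose (k : ℕ) : 2 * Nat.choose (k+1) 2 = k * (k+1) := by
  have h : 2 ∣ (k+1) * k := by
    rcases Nat.even_or_odd k with h | h
    · exact Dvd.dvd.mul_left h.two_dvd _
    · exact Dvd.dvd.mul_right (Odd.add_one h).two_dvd _
  rw [Nat.choose_two_right]
  simp only [Nat.add_sub_cancel]
  rw [Nat.mul_div_cancel' h]
  ring

/-- Greedy step: largest triangular number below `E`. -/
lemma greedy (E : ℕ) (hE : 1 ≤ E) :
    ∃ m R, 1 ≤ m ∧ 2 * R + m * (m+1) = 2 * E ∧ R ≤ m := by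
  classical
  set P : ℕ → Prop := fun k => k * (k+1) ≤ 2 * E with hP
  have hP1 : P 1 := by simp [hP]; omega
  set m := Nat.findGreatest P E with hm
  have hm1 : 1 ≤ m := Nat.le_findGreatest hE hP1
  have hPm : P m := Nat.findGreatest_spec hE hP1
  have hmE : m ≤ E := Nat.findGreatest_le E
  -- upper bound : 2 * E ≤ m * (m+1) + 2 * m
  have hub : 2 * E ≤ m * (m+1) + 2 * m := by
    rcases le_or_gt (m+1) E with h | h
    · have hnot : ¬ P (m+1) := Nat.findGreatest_is_greatest (by omega) h
      have h1 : 2 * E < (m+1) * (m+2) := by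
        simp only [hP] at hnot
        have : (m+1) * (m+1+1) = (m+1)*(m+2) := by ring
        omega
      -- 2E even, (m+1)(m+2) = m(m+1) + 2(m+1); m(m+1) is even
      obtain ⟨c, hc⟩ := Nat.even_mul_succ_self m
      have h2 : (m+1) * (m+2) = m * (m+1) + 2*(m+1) := by ring
      omega
    · -- E ≤ m, so E ≤ m ≤ m(m+1) trivially bounded
      have : E ≤ m := by omega
      nlinarith
  obtain ⟨c, hc⟩ := Nat.even_mul_succ_self m
  refine ⟨m, E - c, hm1, ?_, ?_⟩ <;> simp only [hP] at hPm <;> omega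

lemma main_aux (n E ε : ℕ) (hn : 300 ≤ n) (heps : ε ≤ 1) (hE : 4 * E + 3 * n = n * n + 2 * ε) :
    ∃ l : List ℕ, l.Pairwise (· ≤ ·) ∧ (∀ x ∈ l, 0 < x) ∧ 2 ≤ l.length ∧
      l.head? = some 1 ∧ l.tail.head? = some 1 ∧
      l.sum = n ∧ 2 * (l.map fun m => Nat.choose (m + 1) 2).sum = Nat.choose (n + 1) 2 + ε := by
  have hnn : 300 * n ≤ n * n := by nlinarith
  have hE1 : 1 ≤ E := by omega
  obtain ⟨m₁, R₁, hm₁1, hm₁, hR₁⟩ := greedy E hE1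
  -- bound on m₁ : 2 m₁^2 ≤ n^2  (since m₁(m₁+1) ≤ 2E = (n²-3n+2ε)/2 ≤ n²/2 ... )
  have hexp1 : m₁ * (m₁ + 1) = m₁ * m₁ + m₁ := by ring
  have hm₁sq : 4 * (m₁ * m₁) ≤ 2 * (n * n) := by omega
  have hm₁n : 100 * m₁ ≤ 71 * n := by nlinarith
  have hchn : 2 * Nat.choose (n + 1) 2 = n * (n+1) := two_mul_choose n
  rcases Nat.eq_zero_or_pos R₁ with hR₁0 | hR₁pos
  · -- one big part
    subst hR₁0
    set j := n - (m₁ + 1) with hj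
    have hj2 : 2 ≤ j := by omega
    obtain ⟨j', hj'⟩ : ∃ j', j = j' + 2 := ⟨j - 2, by omega⟩
    refine ⟨List.replicate j 1 ++ [m₁ + 1], ?_, ?_, ?_, ?_, ?_, ?_, ?_⟩
    · rw [List.pairwise_append]
      refine ⟨sorted_replicate j 1, by simp, ?_⟩
      intro a ha b hb
      simp only [List.mem_replicate] at ha
      simp only [List.mem_singleton] at hb
      omega
    · intro x hx
      simp only [List.mem_append, List.mem_replicate, List.mem_singleton] at hx
      omega
    · simp; omega
    · rw [hj']; simp [List.replicate_succ]
    · rw [hj']; simp [List.replicate_succ]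
    · simp [List.sum_replicate]; omega
    · simp only [List.map_append, List.map_replicate, List.sum_append, List.sum_replicate,
        List.map_cons, List.map_nil, List.sum_cons, List.sum_nil]
      have h1 : 2 * Nat.choose (m₁ + 1 + 1) 2 = m₁*m₁ + 3*m₁ + 2 := by
        rw [two_mul_choose (m₁+1)]; ring
      have hc22 : Nat.choose (1+1) 2 = 1 := rfl
      simp only [smul_eq_mul, mul_one, Nat.choose_one_right, hc22]
      have hjeq : j + (m₁ + 1) = n := by omega
      linarith [h1, hm₁, hE, hchn, hjeq]
  · obtain ⟨m₂, R₂, hm₂1, hm₂, hR₂⟩ := greedy R₁ hR₁pos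
    have hexp2 : m₂ * (m₂ + 1) = m₂ * m₂ + m₂ := by ring
    have hm₂m₂ : m₂ ≤ m₂ * m₂ := Nat.le_mul_of_pos_left m₂ hm₂1
    have hm₁nle : m₁ ≤ n := by linarith
    have key : m₂ * m₂ + m₂ ≤ 2 * m₁ := by omega
    have hm₂m₁ : m₂ ≤ m₁ := by omega
    have hm₂sq : m₂ * m₂ ≤ 2 * n := by omega
    have hbig : m₁ + 3 * m₂ + 6 ≤ n := by
      rcases le_or_gt m₂ 24 with h24 | h24
      · linarith
      · have h25 : 25 * m₂ ≤ m₂ * m₂ := Nat.mul_le_mul_right m₂ h24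
        linarith
    set j := n - (m₁ + m₂ + 2 * R₂ + 2) with hj
    have hj2 : 2 ≤ j := by omega
    obtain ⟨j', hj'⟩ : ∃ j', j = j' + 2 := ⟨j - 2, by omega⟩
    refine ⟨List.replicate j 1 ++ (List.replicate R₂ 2 ++ [m₂ + 1, m₁ + 1]), ?_, ?_, ?_, ?_, ?_, ?_, ?_⟩
    · rw [List.pairwise_append, List.pairwise_append]
      refine ⟨sorted_replicate j 1, ⟨sorted_replicate R₂ 2, ?_, ?_⟩, ?_⟩
      · refine List.pairwise_cons.mpr ⟨?_, by simp⟩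
        intro b hb
        simp only [List.mem_cons, List.not_mem_nil, or_false] at hb
        rcases hb with rfl | rfl <;> omega
      · intro a ha b hb
        simp only [List.mem_replicate] at ha
        simp only [List.mem_cons, List.not_mem_nil, or_false] at hb
        rcases hb with rfl | rfl <;> omega
      · intro a ha b hb
        simp only [List.mem_replicate] at ha
        simp only [List.mem_append, List.mem_replicate, List.mem_cons, List.not_mem_nil, or_false] at hb
        rcases hb with ⟨_, rfl⟩ | rfl | rfl <;> omega
    · intro x hx
      simp only [List.mem_append, List.mem_replicate, List.mem_cons, List.not_mem_nil, or_false] at hx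
      rcases hx with ⟨_, rfl⟩ | ⟨_, rfl⟩ | rfl | rfl <;> omega
    · simp; omega
    · rw [hj']; simp [List.replicate_succ]
    · rw [hj']; simp [List.replicate_succ]
    · simp [List.sum_replicate]; omega
    · simp only [List.map_append, List.map_replicate, List.sum_append, List.sum_replicate,
        List.map_cons, List.map_nil, List.sum_cons, List.sum_nil, smul_eq_mul, mul_one]
      have h1 : 2 * Nat.choose (m₁ + 1 + 1) 2 = m₁*m₁ + 3*m₁ + 2 := by
        rw [two_mul_choose (m₁+1)]; ring
      have h2 : 2 * Nat.choose (m₂ + 1 + 1) 2 = m₂*m₂ + 3*m₂ + 2 := by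
        rw [two_mul_choose (m₂+1)]; ring
      have h3 : Nat.choose (2+1) 2 = 3 := rfl
      have hc22 : Nat.choose (1+1) 2 = 1 := rfl
      simp only [Nat.choose_one_right, h3, hc22, smul_eq_mul, mul_one]
      have hjeq : j + (m₁ + m₂ + 2 * R₂ + 2) = n := by omega
      linarith [h1, h2, hm₁, hm₂, hE, hchn, hjeq]

/-- For all but finitely many positive integers `n`: if `n ≡ 0, 3 (mod 4)` then the
partition condition `GoodPartitionA n` holds, and if `n ≡ 1, 2 (mod 4)` then the partition
condition `GoodPartitionB n` holds. -/
theorem almost_all_n_good_partition :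
    {n : ℕ | 0 < n ∧ ¬ (((n % 4 = 0 ∨ n % 4 = 3) → GoodPartitionA n) ∧
      ((n % 4 = 1 ∨ n % 4 = 2) → GoodPartitionB n))}.Finite := by
  apply Set.Finite.subset (Set.finite_Iio 300)
  intro n hn
  simp only [Set.mem_setOf_eq] at hn
  rw [Set.mem_Iio]
  by_contra hge
  push_neg at hge
  refine hn.2 ⟨?_, ?_⟩
  · intro hmod
    have hEex : ∃ E, 4 * E + 3 * n = n * n + 2 * 0 := by
      rcases hmod with h0 | h3
      · obtain ⟨q, rfl⟩ : ∃ q, n = 4 * q := ⟨n / 4, by omega⟩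
        have hq3 : 3 * q ≤ 4 * q * q := by nlinarith
        exact ⟨4 * q * q - 3 * q, by zify [hq3]; ring⟩
      · obtain ⟨q, rfl⟩ : ∃ q, n = 4 * q + 3 := ⟨n / 4, by omega⟩
        exact ⟨4 * q * q + 3 * q, by ring⟩
    obtain ⟨E, hE⟩ := hEex
    obtain ⟨l, hs, hp, _, hh, _, hsum, heq⟩ := main_aux n E 0 hge (by omega) hE
    exact ⟨l, hs, hp, hh, hsum, by simpa using heq⟩
  · intro hmod
    have hEex : ∃ E, 4 * E + 3 * n = n * n + 2 * 1 := by
      rcases hmod with h1 | h2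
      · obtain ⟨q, rfl⟩ : ∃ q, n = 4 * q + 1 := ⟨n / 4, by omega⟩
        have hq3 : q ≤ 4 * q * q := by nlinarith
        exact ⟨4 * q * q - q, by zify [hq3]; ring⟩
      · obtain ⟨q, rfl⟩ : ∃ q, n = 4 * q + 2 := ⟨n / 4, by omega⟩
        exact ⟨4 * q * q + q, by ring⟩
    obtain ⟨E, hE⟩ := hEex
    obtain ⟨l, hs, hp, hlen, hh, hth, hsum, heq⟩ := main_aux n E 1 hge (by omega) hE
    exact ⟨l, hs, hp, hlen, hh, hth, hsum, heq⟩
end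

section
/- For each n in the set {6, 9, 10, 13, 16, 17, 26, 33} there is no finite nondecreasing sequence of positive integers n₁ ≤ … ≤ n_k with n₁ + … + n_k = n satisfying the following: if n ≡ 0 or 3 (mod 4), that n₁ = 1 and 2·(C(n₁+1,2) + … + C(n_k+1,2)) = C(n+1,2); if n ≡ 1 or 2 (mod 4), that k ≥ 2, n₁ = n₂ = 1 and 2·(C(n₁+1,2) + … + C(n_k+1,2)) = C(n+1,2) + 1. -/
def exf (m : ℕ) : ℕ := Nat.choose (m + 1) 2

def exsearch (fuel lo s t : ℕ) : Bool :=
  if s = 0 then t == 0 else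
  match fuel with
  | 0 => false
  | fuel + 1 =>
    (List.range' lo (s + 1 - lo)).any fun a =>
      decide (2 * exf a ≤ t) && exsearch fuel a (s - a) (t - 2 * exf a)

theorem exsearch_complete : ∀ (fuel : ℕ) (l : List ℕ) (lo : ℕ), 1 ≤ lo →
    l.Pairwise (· ≤ ·) → (∀ x ∈ l, lo ≤ x) → l.length ≤ fuel →
    exsearch fuel lo l.sum (2 * (l.map exf).sum) = true := by
  intro fuel
  induction fuel with
  | zero =>
    intro l lo _ _ _ hlen
    have : l = [] := List.eq_nil_of_length_eq_zero (Nat.le_zero.mp hlen)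
    subst this
    simp [exsearch]
  | succ fuel ih =>
    intro l lo hlo hs hge hlen
    match l with
    | [] => simp [exsearch]
    | a :: l' =>
      have ha : lo ≤ a := hge a (List.mem_cons_self)
      have hpos : 0 < a := lt_of_lt_of_le hlo ha
      rw [exsearch]
      rw [List.pairwise_cons] at hs
      have hne : (a :: l').sum ≠ 0 := by simp; omega
      rw [if_neg hne]
      simp only [List.any_eq_true, List.mem_range'_1, Bool.and_eq_true, decide_eq_true_eq]
      have hale : a ≤ (a :: l').sum := by simp [List.sum_cons]
      have hfle : 2 * exf a ≤ 2 * ((a :: l').map exf).sum := by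
        simp [List.map_cons, Nat.mul_add]
      refine ⟨a, ⟨ha, by omega⟩, hfle, ?_⟩
      have h1 : (a :: l').sum - a = l'.sum := by simp
      have h2 : 2 * ((a :: l').map exf).sum - 2 * exf a = 2 * (l'.map exf).sum := by
        simp [Nat.mul_add]
      rw [h1, h2]
      exact ih l' a (le_trans hlo ha) hs.2 hs.1 (by simpa using Nat.lt_succ_iff.mp (Nat.lt_of_lt_of_le (Nat.lt_succ_self _) hlen))

theorem ex_length_le_sum (l : List ℕ) (h : ∀ x ∈ l, 1 ≤ x) : l.length ≤ l.sum := by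
  induction l with
  | nil => simp
  | cons a l ih =>
    simp only [List.length_cons, List.sum_cons]
    have h1 := h a (List.mem_cons_self)
    have h2 := ih fun x hx => h x (List.mem_cons_of_mem _ hx)
    omega

theorem ex_caseA (n : ℕ) (l : List ℕ) (hs : l.Pairwise (· ≤ ·)) (hsum : l.sum = n)
    (h1 : l.head? = some 1)
    (ht : 2 * (l.map fun m => Nat.choose (m + 1) 2).sum = Nat.choose (n + 1) 2) :
    exsearch (n - 1) 1 (n - 1) (Nat.choose (n + 1) 2 - 2) = true := by
  match l with
  | [] => simp at h1
  | a :: l' =>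
    have ha : a = 1 := by simpa using h1
    subst ha
    rw [List.pairwise_cons] at hs
    have hge : ∀ x ∈ l', 1 ≤ x := hs.1
    have hsum' : l'.sum = n - 1 := by simp [List.sum_cons] at hsum; omega
    have hlen : l'.length ≤ l'.sum := ex_length_le_sum l' hge
    have key := exsearch_complete l'.sum l' 1 le_rfl hs.2 hge hlen
    have ht' : 2 * (l'.map exf).sum = Nat.choose (n + 1) 2 - 2 := by
      simp only [show (fun m => Nat.choose (m + 1) 2) = exf from rfl] at ht
      simp only [List.map_cons, List.sum_cons] at ht
      have hc : exf 1 = 1 := by decide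
      omega
    rw [hsum', ht'] at key
    exact key

theorem ex_caseB (n : ℕ) (l : List ℕ) (hs : l.Pairwise (· ≤ ·)) (hsum : l.sum = n)
    (h1 : l.head? = some 1) (h2 : l.tail.head? = some 1)
    (ht : 2 * (l.map fun m => Nat.choose (m + 1) 2).sum = Nat.choose (n + 1) 2 + 1) :
    exsearch (n - 2) 1 (n - 2) (Nat.choose (n + 1) 2 + 1 - 4) = true := by
  match l with
  | [] => simp at h1
  | [a] => simp at h2
  | a :: b :: l' =>
    have ha : a = 1 := by simpa using h1
    have hb : b = 1 := by simpa using h2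
    subst ha; subst hb
    rw [List.pairwise_cons] at hs
    rw [List.pairwise_cons] at hs
    obtain ⟨hs1, hs2, hs3⟩ := hs
    have hge : ∀ x ∈ l', 1 ≤ x := hs2
    have hsum' : l'.sum = n - 2 := by simp [List.sum_cons] at hsum; omega
    have hlen : l'.length ≤ l'.sum := ex_length_le_sum l' hge
    have key := exsearch_complete l'.sum l' 1 le_rfl hs3 hge hlen
    have ht' : 2 * (l'.map exf).sum = Nat.choose (n + 1) 2 + 1 - 4 := by
      simp only [show (fun m => Nat.choose (m + 1) 2) = exf from rfl] at ht
      simp only [List.map_cons, List.sum_cons] at ht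
      have hc : exf 1 = 1 := by decide
      omega
    rw [hsum', ht'] at key
    exact key

set_option maxHeartbeats 8000000 in
/-- For each `n ∈ {6, 9, 10, 13, 16, 17, 26, 33}` there is no nondecreasing list of
positive integers summing to `n` which satisfies: if `n ≡ 0, 3 (mod 4)`, that the first
entry is `1` and `2 * Σ C(nᵢ+1, 2) = C(n+1, 2)`; and if `n ≡ 1, 2 (mod 4)`, that it has
length at least `2`, its first two entries are `1` and
`2 * Σ C(nᵢ+1, 2) = C(n+1, 2) + 1`. -/
theorem no_good_partition_for_exceptional_n :
    ∀ n ∈ ([6, 9, 10, 13, 16, 17, 26, 33] : List ℕ),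
      ¬ ∃ l : List ℕ, l.Pairwise (· ≤ ·) ∧ (∀ x ∈ l, 0 < x) ∧ l.sum = n ∧
        ((n % 4 = 0 ∨ n % 4 = 3) → l.head? = some 1 ∧
          2 * (l.map fun m => Nat.choose (m + 1) 2).sum = Nat.choose (n + 1) 2) ∧
        ((n % 4 = 1 ∨ n % 4 = 2) → 2 ≤ l.length ∧ l.head? = some 1 ∧
          l.tail.head? = some 1 ∧
          2 * (l.map fun m => Nat.choose (m + 1) 2).sum = Nat.choose (n + 1) 2 + 1) := by
  intro n hn
  fin_cases hn
  · rintro ⟨l, hs, -, hsum, -, hB⟩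
    obtain ⟨-, h1, h2, ht⟩ := hB (Or.inr (by norm_num))
    exact absurd (ex_caseB 6 l hs hsum h1 h2 ht) (by decide)
  · rintro ⟨l, hs, -, hsum, -, hB⟩
    obtain ⟨-, h1, h2, ht⟩ := hB (Or.inl (by norm_num))
    exact absurd (ex_caseB 9 l hs hsum h1 h2 ht) (by decide)
  · rintro ⟨l, hs, -, hsum, -, hB⟩
    obtain ⟨-, h1, h2, ht⟩ := hB (Or.inr (by norm_num))
    exact absurd (ex_caseB 10 l hs hsum h1 h2 ht) (by decide)
  · rintro ⟨l, hs, -, hsum, -, hB⟩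
    obtain ⟨-, h1, h2, ht⟩ := hB (Or.inl (by norm_num))
    exact absurd (ex_caseB 13 l hs hsum h1 h2 ht) (by decide)
  · rintro ⟨l, hs, -, hsum, hA, -⟩
    obtain ⟨h1, ht⟩ := hA (Or.inl (by norm_num))
    exact absurd (ex_caseA 16 l hs hsum h1 ht) (by decide)
  · rintro ⟨l, hs, -, hsum, -, hB⟩
    obtain ⟨-, h1, h2, ht⟩ := hB (Or.inl (by norm_num))
    exact absurd (ex_caseB 17 l hs hsum h1 h2 ht) (by decide)
  · rintro ⟨l, hs, -, hsum, -, hB⟩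
    obtain ⟨-, h1, h2, ht⟩ := hB (Or.inr (by norm_num))
    exact absurd (ex_caseB 26 l hs hsum h1 h2 ht) (by decide)
  · rintro ⟨l, hs, -, hsum, -, hB⟩
    obtain ⟨-, h1, h2, ht⟩ := hB (Or.inl (by norm_num))
    exact absurd (ex_caseB 33 l hs hsum h1 h2 ht) (by decide)
end

section
/- Let w ∈ ℤ, let h : ℤ × ℤ → ℕ be finitely supported with h(p,q) = 0 unless p + q = w and p < q, and let h⁺, h⁻ ∈ ℕ, with h⁺ = h⁻ = 0 if w is odd. Define F(s) := Π_{(p,q)} Γ_ℂ(s−p)^{h(p,q)} · Γ_ℝ(s − w/2)^{h⁺} · Γ_ℝ(s − w/2 + 1)^{h⁻} (the last two factors present only when w is even). Then: if w is even, F has a pole of order exactly h⁺ at s = w/2; and if w is odd, F has a pole of order exactly h((w−1)/2, (w+1)/2) at s = (w−1)/2. -/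
open Complex

/-- The real Gamma factor `Γ_ℝ(s) = π^(-s/2) Γ(s/2)`. -/
noncomputable def GammaR (s : ℂ) : ℂ := (Real.pi : ℂ) ^ (-s / 2) * Complex.Gamma (s / 2)

/-- The complex Gamma factor `Γ_ℂ(s) = 2 (2π)^(-s) Γ(s)`. -/
noncomputable def GammaC (s : ℂ) : ℂ := 2 * (2 * (Real.pi : ℂ)) ^ (-s) * Complex.Gamma s

/-- The archimedean `L`-factor
`F(s) = Π_{(p,q)} Γ_ℂ(s - p)^{h(p,q)} · Γ_ℝ(s - w/2)^{h⁺} · Γ_ℝ(s - w/2 + 1)^{h⁻}`. -/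
noncomputable def gammaFactor (w : ℤ) (h : (ℤ × ℤ) →₀ ℕ) (hp hm : ℕ) (s : ℂ) : ℂ :=
  (∏ pq ∈ h.support, GammaC (s - (pq.1 : ℂ)) ^ h pq) *
    GammaR (s - (w : ℂ) / 2) ^ hp * GammaR (s - (w : ℂ) / 2 + 1) ^ hm


open Filter Topology in
/-- Local form: `f z = (z - x)^n * g z` near (punctured) `x`, `g` analytic nonvanishing. -/
def LocalForm (f : ℂ → ℂ) (x : ℂ) (n : ℤ) : Prop :=
  ∃ g : ℂ → ℂ, AnalyticAt ℂ g x ∧ g x ≠ 0 ∧ ∀ᶠ z in 𝓝[≠] x, f z = (z - x) ^ n * g z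

namespace LocalForm

open Filter Topology

lemma congr_fun {f f' : ℂ → ℂ} {x : ℂ} {n : ℤ} (h : LocalForm f x n)
    (hff' : ∀ z, f z = f' z) : LocalForm f' x n := by
  obtain ⟨g, hg, hg0, heq⟩ := h
  exact ⟨g, hg, hg0, heq.mono fun z hz ↦ (hff' z) ▸ hz⟩

lemma of_analytic {f : ℂ → ℂ} {x : ℂ} (hf : AnalyticAt ℂ f x) (h0 : f x ≠ 0) :
    LocalForm f x 0 :=
  ⟨f, hf, h0, Eventually.of_forall fun z ↦ by simp⟩

lemma mul {f₁ f₂ : ℂ → ℂ} {x : ℂ} {n₁ n₂ : ℤ} (h₁ : LocalForm f₁ x n₁)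
    (h₂ : LocalForm f₂ x n₂) : LocalForm (fun z ↦ f₁ z * f₂ z) x (n₁ + n₂) := by
  obtain ⟨g₁, hg₁, hg₁0, he₁⟩ := h₁
  obtain ⟨g₂, hg₂, hg₂0, he₂⟩ := h₂
  refine ⟨fun z ↦ g₁ z * g₂ z, hg₁.mul hg₂, mul_ne_zero hg₁0 hg₂0, ?_⟩
  filter_upwards [he₁, he₂, self_mem_nhdsWithin] with z e₁ e₂ hz
  have hzx : z - x ≠ 0 := sub_ne_zero.mpr hz
  rw [e₁, e₂, zpow_add₀ hzx]; ring

lemma pow {f : ℂ → ℂ} {x : ℂ} {n : ℤ} (h : LocalForm f x n) (k : ℕ) :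
    LocalForm (fun z ↦ f z ^ k) x (k * n) := by
  obtain ⟨g, hg, hg0, he⟩ := h
  refine ⟨fun z ↦ g z ^ k, hg.pow k, pow_ne_zero _ hg0, ?_⟩
  filter_upwards [he, self_mem_nhdsWithin] with z e hz
  have hzx : z - x ≠ 0 := sub_ne_zero.mpr hz
  rw [e, mul_pow, ← zpow_natCast ((z - x) ^ n) k, ← zpow_mul, mul_comm n (k : ℤ)]

lemma prod {ι : Type*} (t : Finset ι) (F : ι → ℂ → ℂ) (N : ι → ℤ) (x : ℂ)
    (H : ∀ i ∈ t, LocalForm (F i) x (N i)) :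
    LocalForm (fun z ↦ ∏ i ∈ t, F i z) x (∑ i ∈ t, N i) := by
  classical
  induction t using Finset.induction with
  | empty => simpa using of_analytic analyticAt_const one_ne_zero
  | @insert a s hi ih =>
    have h1 := H a (Finset.mem_insert_self a s)
    have h2 := ih fun i hi' ↦ H i (Finset.mem_insert_of_mem hi')
    have := h1.mul h2
    rw [Finset.sum_insert hi]
    exact this.congr_fun fun z ↦ by rw [Finset.prod_insert hi]

lemma comp_affine {F : ℂ → ℂ} {y : ℂ} {n : ℤ} (h : LocalForm F y n) (a b x : ℂ)
    (ha : a ≠ 0) (hy : a * x + b = y) (f : ℂ → ℂ) (hfF : ∀ z, f z = F (a * z + b)) :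
    LocalForm f x n := by
  obtain ⟨g, hg, hg0, he⟩ := h
  refine ⟨fun z ↦ a ^ n * g (a * z + b), ?_, ?_, ?_⟩
  · have haff : AnalyticAt ℂ (fun z : ℂ ↦ a * z + b) x :=
      (((differentiable_const a).mul differentiable_id).add (differentiable_const b)).analyticAt x
    have h' : AnalyticAt ℂ g (a * x + b) := by rw [hy]; exact hg
    exact analyticAt_const.mul (AnalyticAt.comp (f := fun z ↦ a * z + b) h' haff)
  · simp only [hy]
    exact mul_ne_zero (zpow_ne_zero _ ha) hg0
  · have ht : Tendsto (fun z ↦ a * z + b) (𝓝[≠] x) (𝓝[≠] y) := by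
      apply tendsto_nhdsWithin_of_tendsto_nhds_of_eventually_within
      · have : ContinuousAt (fun z : ℂ ↦ a * z + b) x :=
          ((continuous_const.mul continuous_id).add continuous_const).continuousAt
        exact hy ▸ this.tendsto.mono_left nhdsWithin_le_nhds
      · filter_upwards [self_mem_nhdsWithin] with z hz
        simp only [Set.mem_compl_iff, Set.mem_singleton_iff] at hz ⊢
        intro hcon
        exact hz (mul_left_cancel₀ ha (by linear_combination hcon - hy))
    filter_upwards [ht.eventually he] with z e
    rw [hfF z, e, ← hy]
    have : a * z + b - (a * x + b) = a * (z - x) := by ring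
    rw [this, mul_zpow]
    ring

lemma meromorphic {f : ℂ → ℂ} {x : ℂ} {n : ℤ} (h : LocalForm f x n) :
    ∃ hf : MeromorphicAt f x, meromorphicOrderAt f x = (n : WithTop ℤ) := by
  obtain ⟨g, hg, hg0, he⟩ := h
  have hf : MeromorphicAt f x :=
    MeromorphicAt.iff_eventuallyEq_zpow_smul_analyticAt.mpr
      ⟨n, g, hg, he.mono fun z hz ↦ by rw [hz, smul_eq_mul]⟩
  exact ⟨hf, (meromorphicOrderAt_eq_int_iff (n := n) hf).mpr
    ⟨g, hg, hg0, he.mono fun z hz ↦ by rw [hz, smul_eq_mul]⟩⟩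

end LocalForm

open Filter Topology

lemma re_pos_ne_neg_nat {y : ℂ} (hy : 0 < y.re) (m : ℕ) : y ≠ -(m : ℂ) := by
  intro hcon
  rw [hcon] at hy
  simp only [neg_re, natCast_re] at hy
  have : (0 : ℝ) ≤ m := Nat.cast_nonneg m
  linarith

lemma analyticAt_Gamma_of_re_pos {y : ℂ} (hy : 0 < y.re) :
    AnalyticAt ℂ Complex.Gamma y := by
  have hopen : IsOpen {z : ℂ | 0 < z.re} := isOpen_lt continuous_const Complex.continuous_re
  refine DifferentiableOn.analyticAt (s := {z : ℂ | 0 < z.re}) ?_ (hopen.mem_nhds hy)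
  intro z hz
  exact (Complex.differentiableAt_Gamma z (re_pos_ne_neg_nat hz)).differentiableWithinAt

lemma localForm_Gamma_pos {y : ℂ} (hy : 0 < y.re) : LocalForm Complex.Gamma y 0 :=
  LocalForm.of_analytic (analyticAt_Gamma_of_re_pos hy) (Complex.Gamma_ne_zero_of_re_pos hy)

lemma localForm_Gamma_zero : LocalForm Complex.Gamma 0 (-1) := by
  refine ⟨fun z ↦ Complex.Gamma (z + 1), ?_, by simp [Complex.Gamma_one], ?_⟩
  · have haff : AnalyticAt ℂ (fun z : ℂ ↦ z + 1) 0 :=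
      (differentiable_id.add (differentiable_const 1)).analyticAt 0
    exact AnalyticAt.comp (f := fun z : ℂ ↦ z + 1)
      (analyticAt_Gamma_of_re_pos (by simp : (0 : ℝ) < ((0 : ℂ) + 1).re)) haff
  · filter_upwards [self_mem_nhdsWithin] with z hz
    simp only [Set.mem_compl_iff, Set.mem_singleton_iff] at hz
    rw [Complex.Gamma_add_one z hz, sub_zero, zpow_neg_one]
    field_simp

lemma two_pi_ne_zero : (2 * (Real.pi : ℂ)) ≠ 0 :=
  mul_ne_zero two_ne_zero (by exact_mod_cast Real.pi_ne_zero)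

/-- The prefactor of `GammaC` is entire and nonvanishing. -/
lemma localForm_GammaC_prefactor (y : ℂ) :
    LocalForm (fun t ↦ 2 * (2 * (Real.pi : ℂ)) ^ (-t)) y 0 := by
  have hfun : (fun t : ℂ ↦ 2 * (2 * (Real.pi : ℂ)) ^ (-t)) =
      fun t ↦ 2 * Complex.exp (Complex.log (2 * (Real.pi : ℂ)) * (-t)) := by
    funext t
    rw [Complex.cpow_def_of_ne_zero two_pi_ne_zero]
  rw [hfun]
  refine LocalForm.of_analytic ?_ (mul_ne_zero two_ne_zero (Complex.exp_ne_zero _))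
  refine analyticAt_const.mul ?_
  have : Differentiable ℂ (fun t : ℂ ↦ Complex.exp (Complex.log (2 * (Real.pi : ℂ)) * (-t))) :=
    Complex.differentiable_exp.comp (differentiable_const _ |>.mul differentiable_neg)
  exact this.analyticAt _

lemma localForm_GammaR_prefactor (y : ℂ) :
    LocalForm (fun t ↦ (Real.pi : ℂ) ^ (-t / 2)) y 0 := by
  have hfun : (fun t : ℂ ↦ (Real.pi : ℂ) ^ (-t / 2)) =
      fun t ↦ Complex.exp (Complex.log (Real.pi : ℂ) * (-t / 2)) := by
    funext t
    rw [Complex.cpow_def_of_ne_zero (by exact_mod_cast Real.pi_ne_zero)]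
  rw [hfun]
  refine LocalForm.of_analytic ?_ (Complex.exp_ne_zero _)
  have : Differentiable ℂ (fun t : ℂ ↦ Complex.exp (Complex.log (Real.pi : ℂ) * (-t / 2))) :=
    Complex.differentiable_exp.comp
      ((differentiable_const _).mul (differentiable_neg.div_const 2))
  exact this.analyticAt _

lemma localForm_GammaC_pos {y : ℂ} (hy : 0 < y.re) : LocalForm GammaC y 0 := by
  have h1 := (localForm_GammaC_prefactor y).mul (localForm_Gamma_pos hy)
  have h2 := h1.congr_fun (f' := GammaC) fun z ↦ rfl
  simpa using h2

lemma localForm_GammaC_zero : LocalForm GammaC 0 (-1) := by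
  have h1 := (localForm_GammaC_prefactor 0).mul localForm_Gamma_zero
  have h2 := h1.congr_fun (f' := GammaC) fun z ↦ rfl
  simpa using h2

lemma localForm_GammaR_pos {y : ℂ} (hy : 0 < y.re) : LocalForm GammaR y 0 := by
  have hy2 : 0 < (y / 2).re := by
    rw [Complex.div_ofNat_re]
    positivity
  have h1 := (localForm_GammaR_prefactor y).mul
    ((localForm_Gamma_pos hy2).comp_affine (1 / 2) 0 y (by norm_num) (by ring)
      (fun z ↦ Complex.Gamma (z / 2)) (fun z ↦ congrArg Complex.Gamma (by ring)))
  have h2 := h1.congr_fun (f' := GammaR) fun z ↦ rfl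
  simpa using h2

lemma localForm_GammaR_zero : LocalForm GammaR 0 (-1) := by
  have h1 := (localForm_GammaR_prefactor 0).mul
    (localForm_Gamma_zero.comp_affine (1 / 2) 0 0 (by norm_num) (by ring)
      (fun z ↦ Complex.Gamma (z / 2)) (fun z ↦ congrArg Complex.Gamma (by ring)))
  have h2 := h1.congr_fun (f' := GammaR) fun z ↦ rfl
  simpa using h2

/-- `GammaR (z - c)` local form at `x`, regular case. -/
lemma localForm_GammaR_sub_pos (c : ℂ) {x : ℂ} (hx : 0 < (x - c).re) :
    LocalForm (fun z ↦ GammaR (z - c)) x 0 :=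
  (localForm_GammaR_pos hx).comp_affine 1 (-c) x one_ne_zero (by ring) _
    (fun z ↦ congrArg GammaR (by ring))

lemma localForm_GammaR_sub_zero (c : ℂ) {x : ℂ} (hx : x - c = 0) :
    LocalForm (fun z ↦ GammaR (z - c)) x (-1) :=
  localForm_GammaR_zero.comp_affine 1 (-c) x one_ne_zero (by rw [← hx]; ring) _
    (fun z ↦ congrArg GammaR (by ring))

lemma localForm_GammaC_sub_pos (c : ℂ) {x : ℂ} (hx : 0 < (x - c).re) :
    LocalForm (fun z ↦ GammaC (z - c)) x 0 :=
  (localForm_GammaC_pos hx).comp_affine 1 (-c) x one_ne_zero (by ring) _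
    (fun z ↦ congrArg GammaC (by ring))

lemma localForm_GammaC_sub_zero (c : ℂ) {x : ℂ} (hx : x - c = 0) :
    LocalForm (fun z ↦ GammaC (z - c)) x (-1) :=
  localForm_GammaC_zero.comp_affine 1 (-c) x one_ne_zero (by rw [← hx]; ring) _
    (fun z ↦ congrArg GammaC (by ring))

/-- If `w` is even, the archimedean `L`-factor has a pole of order exactly `h⁺` at
`s = w/2`; if `w` is odd, it has a pole of order exactly `h((w-1)/2, (w+1)/2)` at
`s = (w-1)/2`. A pole of order `0` means analytic and nonvanishing, i.e. the
meromorphic order is `0`. -/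
theorem gammaFactor_pole_order_middle (w : ℤ) (h : (ℤ × ℤ) →₀ ℕ)
    (hsupp : ∀ p q : ℤ, h (p, q) ≠ 0 → p + q = w ∧ p < q)
    (hp hm : ℕ) (hodd : ¬ (2 ∣ w) → hp = 0 ∧ hm = 0) :
    (2 ∣ w → ∃ hF : MeromorphicAt (gammaFactor w h hp hm) ((w / 2 : ℤ) : ℂ),
      meromorphicOrderAt (gammaFactor w h hp hm) ((w / 2 : ℤ) : ℂ) = (-(hp : ℤ) : WithTop ℤ)) ∧
    (¬ (2 ∣ w) → ∃ hF : MeromorphicAt (gammaFactor w h hp hm) (((w - 1) / 2 : ℤ) : ℂ),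
      meromorphicOrderAt (gammaFactor w h hp hm) (((w - 1) / 2 : ℤ) : ℂ) = (-(h ((w - 1) / 2, (w + 1) / 2) : ℤ) : WithTop ℤ)) := by
  classical
  constructor
  · rintro ⟨k, rfl⟩
    have hx : (((2 * k) / 2 : ℤ) : ℂ) = (k : ℂ) := by
      rw [Int.mul_ediv_cancel_left k two_ne_zero]
    rw [hx]
    have hA : LocalForm (fun z ↦ ∏ pq ∈ h.support, GammaC (z - (pq.1 : ℂ)) ^ h pq)
        (k : ℂ) 0 := by
      have hloc : ∀ pq ∈ h.support,
          LocalForm (fun z ↦ GammaC (z - (pq.1 : ℂ)) ^ h pq) (k : ℂ) ((fun _ ↦ (0:ℤ)) pq) := by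
        intro pq hpq
        have hne : h (pq.1, pq.2) ≠ 0 := by
          rw [Prod.mk.eta]; exact Finsupp.mem_support_iff.mp hpq
        obtain ⟨hsum, hlt⟩ := hsupp pq.1 pq.2 hne
        have hppos : 0 < ((k : ℂ) - (pq.1 : ℂ)).re := by
          have e : (k : ℂ) - (pq.1 : ℂ) = ((k - pq.1 : ℤ) : ℂ) := by push_cast; ring
          rw [e, Complex.intCast_re]
          exact_mod_cast (by omega : (0:ℤ) < k - pq.1)
        simpa using (localForm_GammaC_sub_pos (pq.1 : ℂ) hppos).pow (h pq)
      have := LocalForm.prod h.support (fun pq z ↦ GammaC (z - (pq.1 : ℂ)) ^ h pq)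
        (fun _ ↦ (0:ℤ)) (k : ℂ) hloc
      simpa using this
    have hB : LocalForm (fun z ↦ GammaR (z - ((2 * k : ℤ) : ℂ) / 2) ^ hp)
        (k : ℂ) (-(hp : ℤ)) := by
      have h0 : (k : ℂ) - ((2 * k : ℤ) : ℂ) / 2 = 0 := by push_cast; ring
      simpa using (localForm_GammaR_sub_zero (((2 * k : ℤ) : ℂ) / 2) h0).pow hp
    have hC : LocalForm (fun z ↦ GammaR (z - ((2 * k : ℤ) : ℂ) / 2 + 1) ^ hm)
        (k : ℂ) 0 := by
      have h1 : 0 < ((k : ℂ) - (((2 * k : ℤ) : ℂ) / 2 - 1)).re := by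
        have e : (k : ℂ) - (((2 * k : ℤ) : ℂ) / 2 - 1) = 1 := by push_cast; ring
        rw [e]; simp
      have := ((localForm_GammaR_sub_pos (((2 * k : ℤ) : ℂ) / 2 - 1) h1).congr_fun
        (f' := fun z ↦ GammaR (z - ((2 * k : ℤ) : ℂ) / 2 + 1))
        (fun z ↦ congrArg GammaR (by ring))).pow hm
      simpa using this
    have LF2 := (hA.mul hB).mul hC
    rw [show ((0 : ℤ) + -(hp : ℤ)) + 0 = -(hp : ℤ) by ring] at LF2
    exact (LF2.congr_fun (f' := gammaFactor (2 * k) h hp hm) fun z ↦ rfl).meromorphic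
  · intro hw
    obtain ⟨hp0, hm0⟩ := hodd hw
    subst hp0; subst hm0
    set x : ℂ := (((w - 1) / 2 : ℤ) : ℂ) with hxdef
    set key : ℤ × ℤ := ((w - 1) / 2, (w + 1) / 2) with hkeydef
    have hA : LocalForm (fun z ↦ ∏ pq ∈ h.support, GammaC (z - (pq.1 : ℂ)) ^ h pq)
        x (-(h key : ℤ)) := by
      have hloc : ∀ pq ∈ h.support,
          LocalForm (fun z ↦ GammaC (z - (pq.1 : ℂ)) ^ h pq) x
            ((fun pq ↦ if pq = key then -(h key : ℤ) else 0) pq) := by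
        intro pq hpq
        have hne : h (pq.1, pq.2) ≠ 0 := by
          rw [Prod.mk.eta]; exact Finsupp.mem_support_iff.mp hpq
        obtain ⟨hsumw, hlt⟩ := hsupp pq.1 pq.2 hne
        by_cases hc : pq.1 = (w - 1) / 2
        · have hq : pq.2 = (w + 1) / 2 := by omega
          have hkey : pq = key := Prod.ext hc hq
          have h0 : x - (pq.1 : ℂ) = 0 := by rw [hc, hxdef]; exact sub_self _
          have hpole := (localForm_GammaC_sub_zero (pq.1 : ℂ) h0).pow (h pq)
          simp only [if_pos hkey]
          rw [← hkey]
          simpa using hpole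
        · have hnk : pq ≠ key := fun hcon ↦ hc (by rw [hcon])
          have hppos : 0 < (x - (pq.1 : ℂ)).re := by
            have e : x - (pq.1 : ℂ) = (((w - 1) / 2 - pq.1 : ℤ) : ℂ) := by
              rw [hxdef]; push_cast; ring
            rw [e, Complex.intCast_re]
            exact_mod_cast (by omega : (0:ℤ) < (w - 1) / 2 - pq.1)
          simp only [if_neg hnk]
          simpa using (localForm_GammaC_sub_pos (pq.1 : ℂ) hppos).pow (h pq)
      have hsum : (∑ pq ∈ h.support, if pq = key then -(h key : ℤ) else 0)
          = -(h key : ℤ) := by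
        rw [Finset.sum_ite_eq' h.support key (fun _ ↦ -(h key : ℤ))]
        by_cases hk : key ∈ h.support
        · rw [if_pos hk]
        · rw [if_neg hk, Finsupp.notMem_support_iff.mp hk]; simp
      have := LocalForm.prod h.support (fun pq z ↦ GammaC (z - (pq.1 : ℂ)) ^ h pq)
        (fun pq ↦ if pq = key then -(h key : ℤ) else 0) x hloc
      rwa [hsum] at this
    have hone : LocalForm (fun _ : ℂ ↦ (1 : ℂ)) x 0 :=
      LocalForm.of_analytic analyticAt_const one_ne_zero
    have hB := hone.congr_fun (f' := fun z ↦ GammaR (z - (w : ℂ) / 2) ^ 0)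
      fun z ↦ (pow_zero _).symm
    have hC := hone.congr_fun (f' := fun z ↦ GammaR (z - (w : ℂ) / 2 + 1) ^ 0)
      fun z ↦ (pow_zero _).symm
    have LF2 := (hA.mul hB).mul hC
    rw [show ((-(h key : ℤ)) + 0) + 0 = -(h key : ℤ) by ring] at LF2
    exact (LF2.congr_fun (f' := gammaFactor w h 0 0) fun z ↦ rfl).meromorphic
end
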